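/- Let k, p, q be natural numbers with 3p ≥ q ≥ p ≥ 24k, and let the edges of the complete bipartite graph K_{p,q} with parts P (|P| = p) and Q (|Q| = q) be 3-coloured so that each vertex of P sends at most k edges of colour 3 into Q and each vertex of Q sends at most k edges of colour 2 into P. Then the subgraph induced by colour-1 edges contains a k-connected subgraph G with |P \ V(G)| ≤ 16k and |Q \ V(G)| ≤ 8k; in particular |V(G)| ≥ p + q - 24k. -/

import Mathlib

def IsKConnected {V : Type*} (k : ℕ) (G : SimpleGraph V) : Prop :=
  k < Nat.card V ∧ ∀ S : Set V, S.ncard < k → (G.induce Sᶜ).Connected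

def bipColor (m n r : ℕ) (f : Sym2 (Fin m ⊕ Fin n) → Fin r) (i : Fin r) :
    SimpleGraph (Fin m ⊕ Fin n) where
  Adj a b := (completeBipartiteGraph (Fin m) (Fin n)).Adj a b ∧ f s(a, b) = i
  symm := ⟨fun a b h => ⟨(completeBipartiteGraph (Fin m) (Fin n)).symm.symm a b h.1,
    by rw [Sym2.eq_swap]; exact h.2⟩⟩
  loopless := ⟨fun a h => (completeBipartiteGraph (Fin m) (Fin n)).loopless.irrefl a h.1⟩

open Finset

lemma exists_not_mem_of_card_lt' {α : Type*} [Fintype α] {B : Finset α}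
    (h : B.card < Fintype.card α) : ∃ x, x ∉ B := by
  by_contra hc
  push_neg at hc
  have h2 : (Finset.univ : Finset α) ⊆ B := fun x _ => hc x
  have := Finset.card_le_card h2
  rw [Finset.card_univ] at this
  omega

lemma fin3_eq_zero {x : Fin 3} (h1 : x ≠ 1) (h2 : x ≠ 2) : x = 0 := by
  fin_cases x <;> simp_all

theorem stmt17 (k p q : ℕ) (hk : 1 ≤ k) (hpk : 24 * k ≤ p) (hpq : p ≤ q)
    (hq3 : q ≤ 3 * p)
    (f : Sym2 (Fin p ⊕ Fin q) → Fin 3)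
    (hP : ∀ a : Fin p, ({b : Fin q | f s(Sum.inl a, Sum.inr b) = 2}).ncard ≤ k)
    (hQ : ∀ b : Fin q, ({a : Fin p | f s(Sum.inl a, Sum.inr b) = 1}).ncard ≤ k) :
    ∃ A : Set (Fin p ⊕ Fin q),
      IsKConnected k ((bipColor p q 3 f 0).induce A) ∧
      (Set.range (Sum.inl : Fin p → Fin p ⊕ Fin q) \ A).ncard ≤ 16 * k ∧
      (Set.range (Sum.inr : Fin q → Fin p ⊕ Fin q) \ A).ncard ≤ 8 * k ∧
      p + q - 24 * k ≤ A.ncard := by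
  classical
  have hq24 : 24 * k ≤ q := hpk.trans hpq
  set D1 : Fin p → Finset (Fin q) :=
    fun a => univ.filter fun b => f s(Sum.inl a, Sum.inr b) = 1 with hD1
  set D2 : Fin p → Finset (Fin q) :=
    fun a => univ.filter fun b => f s(Sum.inl a, Sum.inr b) = 2 with hD2
  set E1 : Fin q → Finset (Fin p) :=
    fun b => univ.filter fun a => f s(Sum.inl a, Sum.inr b) = 1 with hE1
  set E2 : Fin q → Finset (Fin p) :=
    fun b => univ.filter fun a => f s(Sum.inl a, Sum.inr b) = 2 with hE2
  have hD2k : ∀ a, (D2 a).card ≤ k := by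
    intro a
    have := hP a
    rwa [Set.ncard_eq_toFinset_card', Set.toFinset_setOf] at this
  have hE1k : ∀ b, (E1 b).card ≤ k := by
    intro b
    have := hQ b
    rwa [Set.ncard_eq_toFinset_card', Set.toFinset_setOf] at this
  have hsum1 : ∑ a, (D1 a).card ≤ k * q := by
    have heq : ∑ a, (D1 a).card = ∑ b, (E1 b).card := by
      simp only [hD1, hE1, Finset.card_filter]
      rw [Finset.sum_comm]
    rw [heq]
    calc ∑ b, (E1 b).card ≤ ∑ _b : Fin q, k := Finset.sum_le_sum fun b _ => hE1k b
      _ = k * q := by simp [mul_comm]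
  have hsum2 : ∑ b, (E2 b).card ≤ k * p := by
    have heq : ∑ b, (E2 b).card = ∑ a, (D2 a).card := by
      simp only [hD2, hE2, Finset.card_filter]
      rw [Finset.sum_comm]
    rw [heq]
    calc ∑ a, (D2 a).card ≤ ∑ _a : Fin p, k := Finset.sum_le_sum fun a _ => hD2k a
      _ = k * p := by simp [mul_comm]
  set PB : Finset (Fin p) := univ.filter fun a => q ≤ 16 * (D1 a).card with hPBdef
  set QB : Finset (Fin q) := univ.filter fun b => p ≤ 8 * (E2 b).card with hQBdef
  have hPB : PB.card ≤ 16 * k := by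
    have h1 : q * PB.card ≤ 16 * ∑ a, (D1 a).card := by
      calc q * PB.card = ∑ _a ∈ PB, q := by rw [Finset.sum_const, smul_eq_mul, mul_comm]
        _ ≤ ∑ a ∈ PB, 16 * (D1 a).card :=
            Finset.sum_le_sum fun a ha => (Finset.mem_filter.mp ha).2
        _ ≤ 16 * ∑ a, (D1 a).card := by
            rw [← Finset.mul_sum]
            exact Nat.mul_le_mul_left _ (Finset.sum_le_sum_of_subset (Finset.subset_univ _))
    have h2 : q * PB.card ≤ q * (16 * k) := by
      calc q * PB.card ≤ 16 * (k * q) := h1.trans (Nat.mul_le_mul_left _ hsum1)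
        _ = q * (16 * k) := by ring
    exact Nat.le_of_mul_le_mul_left h2 (by omega)
  have hQB : QB.card ≤ 8 * k := by
    have h1 : p * QB.card ≤ 8 * ∑ b, (E2 b).card := by
      calc p * QB.card = ∑ _b ∈ QB, p := by rw [Finset.sum_const, smul_eq_mul, mul_comm]
        _ ≤ ∑ b ∈ QB, 8 * (E2 b).card :=
            Finset.sum_le_sum fun b hb => (Finset.mem_filter.mp hb).2
        _ ≤ 8 * ∑ b, (E2 b).card := by
            rw [← Finset.mul_sum]
            exact Nat.mul_le_mul_left _ (Finset.sum_le_sum_of_subset (Finset.subset_univ _))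
    have h2 : p * QB.card ≤ p * (8 * k) := by
      calc p * QB.card ≤ 8 * (k * p) := h1.trans (Nat.mul_le_mul_left _ hsum2)
        _ = p * (8 * k) := by ring
    exact Nat.le_of_mul_le_mul_left h2 (by omega)
  have hPBp : PB.card ≤ p := by
    simpa using Finset.card_le_univ PB
  have hQBq : QB.card ≤ q := by
    simpa using Finset.card_le_univ QB
  set A : Set (Fin p ⊕ Fin q) := (↑(PBᶜ.disjSum QBᶜ) : Set (Fin p ⊕ Fin q)) with hA
  have hAinl : ∀ a : Fin p, Sum.inl a ∈ A ↔ a ∉ PB := by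
    intro a; rw [hA]; simp
  have hAinr : ∀ b : Fin q, Sum.inr b ∈ A ↔ b ∉ QB := by
    intro b; rw [hA]; simp
  have hAcard : A.ncard = (p - PB.card) + (q - QB.card) := by
    rw [hA, Set.ncard_coe_finset, Finset.card_disjSum, Finset.card_compl,
      Finset.card_compl, Fintype.card_fin, Fintype.card_fin]
  -- color helper
  have hcolD : ∀ (a : Fin p) (b : Fin q), b ∉ D1 a → b ∉ D2 a →
      f s(Sum.inl a, Sum.inr b) = 0 := by
    intro a b h1 h2
    simp only [hD1, Finset.mem_filter, Finset.mem_univ, true_and] at h1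
    simp only [hD2, Finset.mem_filter, Finset.mem_univ, true_and] at h2
    exact fin3_eq_zero h1 h2
  have hcolE : ∀ (b : Fin q) (a : Fin p), a ∉ E1 b → a ∉ E2 b →
      f s(Sum.inl a, Sum.inr b) = 0 := by
    intro b a h1 h2
    simp only [hE1, Finset.mem_filter, Finset.mem_univ, true_and] at h1
    simp only [hE2, Finset.mem_filter, Finset.mem_univ, true_and] at h2
    exact fin3_eq_zero h1 h2
  have hadj : ∀ (a : Fin p) (b : Fin q), f s(Sum.inl a, Sum.inr b) = 0 →
      (bipColor p q 3 f 0).Adj (Sum.inl a) (Sum.inr b) := by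
    intro a b hf
    exact ⟨by simp, hf⟩
  refine ⟨A, ⟨?_, ?_⟩, ?_, ?_, ?_⟩
  · -- k < Nat.card A
    rw [Nat.card_coe_set_eq, hAcard]
    omega
  · -- connectivity
    intro S hS
    set S' : Set (Fin p ⊕ Fin q) := Subtype.val '' S with hS'def
    have hS' : S'.ncard < k := by
      rw [hS'def, Set.ncard_image_of_injective _ Subtype.val_injective]; exact hS
    set Sp : Finset (Fin p) := univ.filter (fun a => Sum.inl a ∈ S') with hSpdef
    set Sq : Finset (Fin q) := univ.filter (fun b => Sum.inr b ∈ S') with hSqdef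
    have hSpcard : Sp.card < k := by
      have h1 : (Sum.inl '' {a : Fin p | Sum.inl a ∈ S'} : Set (Fin p ⊕ Fin q)) ⊆ S' := by
        rintro x ⟨a, ha, rfl⟩; exact ha
      have h2 := Set.ncard_le_ncard h1 (Set.toFinite S')
      rw [Set.ncard_image_of_injective _ Sum.inl_injective] at h2
      have h3 : {a : Fin p | Sum.inl a ∈ S'}.ncard = Sp.card := by
        rw [Set.ncard_eq_toFinset_card', Set.toFinset_setOf]
      omega
    have hSqcard : Sq.card < k := by
      have h1 : (Sum.inr '' {b : Fin q | Sum.inr b ∈ S'} : Set (Fin p ⊕ Fin q)) ⊆ S' := by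
        rintro x ⟨b, hb, rfl⟩; exact hb
      have h2 := Set.ncard_le_ncard h1 (Set.toFinite S')
      rw [Set.ncard_image_of_injective _ Sum.inr_injective] at h2
      have h3 : {b : Fin q | Sum.inr b ∈ S'}.ncard = Sq.card := by
        rw [Set.ncard_eq_toFinset_card', Set.toFinset_setOf]
      omega
    have hSmem : ∀ (x : Fin p ⊕ Fin q) (hx : x ∈ A), x ∈ S' ↔ (⟨x, hx⟩ : ↥A) ∈ S := by
      intro x hx
      constructor
      · rintro ⟨y, hy, hyx⟩
        have : y = ⟨x, hx⟩ := Subtype.ext hyx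
        exact this ▸ hy
      · intro h; exact ⟨⟨x, hx⟩, h, rfl⟩
    -- existence of common Q-neighbours
    have hfindQ : ∀ a a' : Fin p, a ∉ PB → a' ∉ PB →
        ∃ b : Fin q, b ∉ QB ∧ Sum.inr b ∉ S' ∧
          f s(Sum.inl a, Sum.inr b) = 0 ∧ f s(Sum.inl a', Sum.inr b) = 0 := by
      intro a a' ha ha'
      have hda : 16 * (D1 a).card < q := by
        by_contra h
        exact ha (Finset.mem_filter.mpr ⟨Finset.mem_univ _, by omega⟩)
      have hda' : 16 * (D1 a').card < q := by
        by_contra h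
        exact ha' (Finset.mem_filter.mpr ⟨Finset.mem_univ _, by omega⟩)
      have hcard : (QB ∪ Sq ∪ D1 a ∪ D2 a ∪ D1 a' ∪ D2 a').card < q := by
        have h1 := Finset.card_union_le (QB ∪ Sq ∪ D1 a ∪ D2 a ∪ D1 a') (D2 a')
        have h2 := Finset.card_union_le (QB ∪ Sq ∪ D1 a ∪ D2 a) (D1 a')
        have h3 := Finset.card_union_le (QB ∪ Sq ∪ D1 a) (D2 a)
        have h4 := Finset.card_union_le (QB ∪ Sq) (D1 a)
        have h5 := Finset.card_union_le QB Sq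
        have h6 := hD2k a
        have h7 := hD2k a'
        omega
      obtain ⟨b, hb⟩ := exists_not_mem_of_card_lt' (by rwa [Fintype.card_fin])
      simp only [Finset.mem_union, not_or] at hb
      obtain ⟨⟨⟨⟨⟨hb1, hb2⟩, hb3⟩, hb4⟩, hb5⟩, hb6⟩ := hb
      refine ⟨b, hb1, ?_, hcolD a b hb3 hb4, hcolD a' b hb5 hb6⟩
      intro hmem; exact hb2 (Finset.mem_filter.mpr ⟨Finset.mem_univ _, hmem⟩)
    -- existence of P-neighbours for Q vertices
    have hfindP : ∀ b : Fin q, b ∉ QB →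
        ∃ a : Fin p, a ∉ PB ∧ Sum.inl a ∉ S' ∧ f s(Sum.inl a, Sum.inr b) = 0 := by
      intro b hb
      have hdb : 8 * (E2 b).card < p := by
        by_contra h
        exact hb (Finset.mem_filter.mpr ⟨Finset.mem_univ _, by omega⟩)
      have hcard : (PB ∪ Sp ∪ E1 b ∪ E2 b).card < p := by
        have h1 := Finset.card_union_le (PB ∪ Sp ∪ E1 b) (E2 b)
        have h2 := Finset.card_union_le (PB ∪ Sp) (E1 b)
        have h3 := Finset.card_union_le PB Sp
        have h4 := hE1k b
        omega
      obtain ⟨a, ha⟩ := exists_not_mem_of_card_lt' (by rwa [Fintype.card_fin])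
      simp only [Finset.mem_union, not_or] at ha
      obtain ⟨⟨⟨ha1, ha2⟩, ha3⟩, ha4⟩ := ha
      refine ⟨a, ha1, ?_, hcolE b a ha3 ha4⟩
      intro hmem; exact ha2 (Finset.mem_filter.mpr ⟨Finset.mem_univ _, hmem⟩)
    -- base vertex
    obtain ⟨a0, ha0⟩ : ∃ a0, a0 ∉ PB ∪ Sp := by
      apply exists_not_mem_of_card_lt'
      rw [Fintype.card_fin]
      have h3 := Finset.card_union_le PB Sp
      omega
    simp only [Finset.mem_union, not_or] at ha0
    obtain ⟨ha0P, ha0Sp⟩ := ha0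
    have ha0S' : Sum.inl a0 ∉ S' := fun h =>
      ha0Sp (Finset.mem_filter.mpr ⟨Finset.mem_univ _, h⟩)
    have ha0A : Sum.inl a0 ∈ A := (hAinl a0).mpr ha0P
    set H := ((bipColor p q 3 f 0).induce A).induce Sᶜ with hH
    set v0 : ↥(Sᶜ) := ⟨⟨Sum.inl a0, ha0A⟩, fun h => ha0S' ((hSmem _ ha0A).mpr h)⟩ with hv0
    have keyP : ∀ (v : ↥(Sᶜ)) (a : Fin p), v.1.1 = Sum.inl a → H.Reachable v v0 := by
      intro v a hva
      have haP : a ∉ PB := by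
        have := v.1.2
        rw [hva] at this
        exact (hAinl a).mp this
      have haS : Sum.inl a ∉ S' := by
        intro h
        rw [hS'def] at h
        obtain ⟨y, hy, hyx⟩ := h
        apply v.2
        have hyv : y = v.1 := Subtype.ext (by rw [hyx, hva])
        rwa [hyv] at hy
      obtain ⟨b, hbQ, hbS, hfa, hfa0⟩ := hfindQ a a0 haP ha0P
      have hbA : Sum.inr b ∈ A := (hAinr b).mpr hbQ
      have hbC : (⟨Sum.inr b, hbA⟩ : ↥A) ∈ Sᶜ := fun h => hbS ((hSmem _ hbA).mpr h)
      set w : ↥(Sᶜ) := ⟨⟨Sum.inr b, hbA⟩, hbC⟩ with hw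
      have h1 : H.Adj v w := by
        show (bipColor p q 3 f 0).Adj v.1.1 (Sum.inr b)
        rw [hva]; exact hadj a b hfa
      have h2 : H.Adj v0 w := by
        show (bipColor p q 3 f 0).Adj (Sum.inl a0) (Sum.inr b)
        exact hadj a0 b hfa0
      exact h1.reachable.trans h2.symm.reachable
    have keyQ : ∀ (v : ↥(Sᶜ)) (b : Fin q), v.1.1 = Sum.inr b → H.Reachable v v0 := by
      intro v b hvb
      have hbQ : b ∉ QB := by
        have := v.1.2
        rw [hvb] at this
        exact (hAinr b).mp this
      obtain ⟨a, haP, haS, hfab⟩ := hfindP b hbQ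
      have haA : Sum.inl a ∈ A := (hAinl a).mpr haP
      have haC : (⟨Sum.inl a, haA⟩ : ↥A) ∈ Sᶜ := fun h => haS ((hSmem _ haA).mpr h)
      set w : ↥(Sᶜ) := ⟨⟨Sum.inl a, haA⟩, haC⟩ with hw
      have h1 : H.Adj w v := by
        show (bipColor p q 3 f 0).Adj (Sum.inl a) v.1.1
        rw [hvb]; exact hadj a b hfab
      exact h1.symm.reachable.trans (keyP w a rfl)
    have hne : Nonempty ↥(Sᶜ) := ⟨v0⟩
    refine SimpleGraph.Connected.mk ?_
    intro u v
    have hu : H.Reachable u v0 := by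
      obtain ⟨⟨x, hxA⟩, hxS⟩ := u
      cases x with
      | inl a => exact keyP _ a rfl
      | inr b => exact keyQ _ b rfl
    have hv : H.Reachable v v0 := by
      obtain ⟨⟨x, hxA⟩, hxS⟩ := v
      cases x with
      | inl a => exact keyP _ a rfl
      | inr b => exact keyQ _ b rfl
    exact hu.trans hv.symm
  · -- |P \ A| ≤ 16k
    have heq : Set.range (Sum.inl : Fin p → Fin p ⊕ Fin q) \ A
        = Sum.inl '' (↑PB : Set (Fin p)) := by
      ext x
      cases x with
      | inl a => simp [hA, Set.mem_diff]
      | inr b => simp [hA, Set.mem_diff]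
    rw [heq, Set.ncard_image_of_injective _ Sum.inl_injective, Set.ncard_coe_finset]
    exact hPB
  · -- |Q \ A| ≤ 8k
    have heq : Set.range (Sum.inr : Fin q → Fin p ⊕ Fin q) \ A
        = Sum.inr '' (↑QB : Set (Fin q)) := by
      ext x
      cases x with
      | inl a => simp [hA, Set.mem_diff]
      | inr b => simp [hA, Set.mem_diff]
    rw [heq, Set.ncard_image_of_injective _ Sum.inr_injective, Set.ncard_coe_finset]
    exact hQB
  · rw [hAcard]; omega
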